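/- Let C be a multiplicatively disjoint arithmetic circuit over a field K computing a polynomial f, all of whose parse trees are isomorphic, as ordered rooted trees, to one common tree 𝒯 (with |𝒯| vertices). Then there exists a {*}-formula F of maximal dimension 3 and of size at most 9·|C|³·|𝒯| that computes f. -/

import Mathlib

namespace TC

/-- An entry of an input tensor: an element of `K` or a variable. -/
inductive Entry (K : Type) where
  | const : K → Entry K
  | var : ℕ → Entry K

noncomputable def Entry.toPoly {K : Type} [CommSemiring K] : Entry K → MvPolynomial ℕ K
  | .const c => MvPolynomial.C c
  | .var n => MvPolynomial.X n

/-- The index set of a tensor of order `ns`. -/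
def Idx : List ℕ → Type
  | [] => PUnit
  | n :: ns => Fin n × Idx ns

def Idx.cast {xs ys : List ℕ} (h : xs = ys) (e : Idx xs) : Idx ys := h ▸ e

def Idx.app : (xs : List ℕ) → {ys : List ℕ} → Idx xs → Idx ys → Idx (xs ++ ys)
  | [], _, _, f => f
  | _ :: xs, _, e, f => (e.1, Idx.app xs e.2 f)

def Idx.split : (xs : List ℕ) → {ys : List ℕ} → Idx (xs ++ ys) → Idx xs × Idx ys
  | [], _, e => (PUnit.unit, e)
  | _ :: xs, _, e => ((e.1, (Idx.split xs e.2).1), (Idx.split xs e.2).2)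

/-- A tensor over `R`: an order `(n_1, …, n_k)` together with an entry map. -/
structure Tens (R : Type) where
  order : List ℕ
  entry : Idx order → R

/-- Number of entries of a tensor. -/
def Tens.tsize {R} (T : Tens R) : ℕ := T.order.prod

/-- Dimension of a tensor. -/
def Tens.dim {R} (T : Tens R) : ℕ := T.order.length

/-- Maximal order of a tensor. -/
def Tens.maxOrder {R} (T : Tens R) : ℕ := T.order.foldr max 0

/-- `T` and `G` can be contracted: last order of `T` equals first order of `G`. -/
def Tens.Compatible {R} (T G : Tens R) : Prop :=
  T.order ≠ [] ∧ G.order ≠ [] ∧ T.order.getLast? = G.order.head?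

/-- Contraction `T * G` on the last dimension of `T` and the first dimension of `G`
(returning a junk scalar tensor when the orders are incompatible). -/
def Tens.contr {R : Type} [CommSemiring R] (T G : Tens R) : Tens R :=
  match hT : T.order.getLast?, hG : G.order with
  | some c, c' :: ms =>
      if hc : c' = c then
        { order := T.order.dropLast ++ ms
          entry := fun e =>
            let p := Idx.split T.order.dropLast e
            ∑ i : Fin c,
              T.entry (Idx.cast
                (show T.order.dropLast ++ [c] = T.order by
                  have hne : T.order ≠ [] := by
                    intro h; rw [h] at hT; simp at hT
                  have : T.order.getLast hne = c := by
                    have := List.getLast?_eq_some_getLast (l := T.order) hne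
                    rw [this] at hT
                    exact (Option.some.injEq _ _).mp hT
                  rw [← this]
                  exact List.dropLast_append_getLast hne)
                (Idx.app T.order.dropLast p.1 ((i, PUnit.unit) : Idx [c]))) *
              G.entry (Idx.cast
                (show c :: ms = G.order by rw [hG, hc])
                ((i, p.2) : Idx (c :: ms))) }
      else ⟨[], fun _ => 0⟩
  | _, _ => ⟨[], fun _ => 0⟩

end TC

namespace TC

/-- Insert a coordinate value at position `i`, recovering an index for order `l`
from an index for `l.eraseIdx i`. -/
def Idx.insertAt : (l : List ℕ) → (i : Fin l.length) → Fin (l.get i) →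
    Idx (l.eraseIdx i.val) → Idx l
  | _ :: _, ⟨0, _⟩, r, e => (r, e)
  | _ :: l, ⟨i + 1, h⟩, r, e =>
      (e.1, Idx.insertAt l ⟨i, by simpa using Nat.lt_of_succ_lt_succ h⟩ r e.2)

/-- The contraction `T *_{i,j} G` on dimension `i` of `T` and dimension `j` of `G`
(0-based; returns a junk scalar tensor when incompatible). -/
noncomputable def Tens.contrIJ {R : Type} [CommSemiring R] (T G : Tens R) (i j : ℕ) : Tens R :=
  if h : ∃ (hi : i < T.order.length) (hj : j < G.order.length),
      T.order.get ⟨i, hi⟩ = G.order.get ⟨j, hj⟩ then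
    { order := T.order.eraseIdx i ++ G.order.eraseIdx j
      entry := fun e =>
        let hi := h.choose
        let hj := h.choose_spec.choose
        let hc := h.choose_spec.choose_spec
        let p := Idx.split (T.order.eraseIdx i) e
        ∑ r : Fin (T.order.get ⟨i, hi⟩),
          T.entry (Idx.insertAt T.order ⟨i, hi⟩ r p.1) *
          G.entry (Idx.insertAt G.order ⟨j, hj⟩ (Fin.cast hc r) p.2) }
  else ⟨[], fun _ => 0⟩

/-- `{*}`-formulas: leaves are input tensors with entries in `K` or variables,
internal nodes are contractions `*`. -/
inductive SForm (K : Type) where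
  | input : Tens (Entry K) → SForm K
  | contr : SForm K → SForm K → SForm K

variable {K : Type} [Field K]

/-- The tensor computed by a `{*}`-formula. -/
noncomputable def SForm.eval : SForm K → Tens (MvPolynomial ℕ K)
  | .input T => ⟨T.order, fun e => (T.entry e).toPoly⟩
  | .contr F G => (F.eval).contr G.eval

/-- Well-formedness: at every `*`-node the orders match. -/
def SForm.WF : SForm K → Prop
  | .input _ => True
  | .contr F G => F.WF ∧ G.WF ∧ F.eval.Compatible G.eval

/-- Size of a `{*}`-formula: number of `*`-nodes plus sizes of the input tensors. -/
def SForm.size : SForm K → ℕ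
  | .input T => T.tsize
  | .contr F G => F.size + G.size + 1

/-- Dimension of the tensor computed by the formula. -/
noncomputable def SForm.dim (F : SForm K) : ℕ := F.eval.dim

/-- Maximal dimension over all nodes of the formula. -/
noncomputable def SForm.maxdim : SForm K → ℕ
  | .input T => T.dim
  | .contr F G => max ((F.eval.contr G.eval).dim) (max F.maxdim G.maxdim)

/-- Input dimension: maximal dimension of an input tensor. -/
def SForm.inputDim : SForm K → ℕ
  | .input T => T.dim
  | .contr F G => max F.inputDim G.inputDim

/-- Maximum of the maximal orders of the input tensors. -/
def SForm.inputMaxOrder : SForm K → ℕ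
  | .input T => T.maxOrder
  | .contr F G => max F.inputMaxOrder G.inputMaxOrder

/-- All input tensors have dimension at least 2. -/
def SForm.InputsDimGE2 : SForm K → Prop
  | .input T => 2 ≤ T.dim
  | .contr F G => F.InputsDimGE2 ∧ G.InputsDimGE2

/-- A formula of dimension `k` and input dimension `p` is tame if
`maxdim ≤ max k p`. -/
noncomputable def SForm.Tame (F : SForm K) : Prop := F.maxdim ≤ max F.dim F.inputDim

/-- Every subformula is tame. -/
noncomputable def SForm.TotallyTame : SForm K → Prop
  | .input T => (SForm.input T : SForm K).Tame
  | .contr F G => (SForm.contr F G).Tame ∧ F.TotallyTame ∧ G.TotallyTame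

/-- The tensor computed by `F` has a single entry, equal to the polynomial `f`. -/
noncomputable def SForm.ComputesPoly (F : SForm K) (f : MvPolynomial ℕ K) : Prop :=
  F.eval.tsize = 1 ∧ ∀ e, F.eval.entry e = f

/-- `{*_{i,j}}`-formulas: internal nodes carry the pair of contracted dimensions
(0-based). -/
inductive IForm (K : Type) where
  | input : Tens (Entry K) → IForm K
  | contr : ℕ → ℕ → IForm K → IForm K → IForm K

noncomputable def IForm.eval : IForm K → Tens (MvPolynomial ℕ K)
  | .input T => ⟨T.order, fun e => (T.entry e).toPoly⟩
  | .contr i j F G => (F.eval).contrIJ G.eval i j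

def IForm.WF : IForm K → Prop
  | .input _ => True
  | .contr i j F G => F.WF ∧ G.WF ∧
      ∃ (hi : i < F.eval.order.length) (hj : j < G.eval.order.length),
        F.eval.order.get ⟨i, hi⟩ = G.eval.order.get ⟨j, hj⟩

def IForm.size : IForm K → ℕ
  | .input T => T.tsize
  | .contr _ _ F G => F.size + G.size + 1

noncomputable def IForm.dim (F : IForm K) : ℕ := F.eval.dim

noncomputable def IForm.maxdim : IForm K → ℕ
  | .input T => T.dim
  | .contr i j F G => max ((F.eval.contrIJ G.eval i j).dim) (max F.maxdim G.maxdim)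

def IForm.inputDim : IForm K → ℕ
  | .input T => T.dim
  | .contr _ _ F G => max F.inputDim G.inputDim

noncomputable def IForm.Tame (F : IForm K) : Prop := F.maxdim ≤ max F.dim F.inputDim

noncomputable def IForm.TotallyTame : IForm K → Prop
  | .input T => (IForm.input T : IForm K).Tame
  | .contr i j F G => (IForm.contr i j F G).Tame ∧ F.TotallyTame ∧ G.TotallyTame

noncomputable def IForm.ComputesPoly (F : IForm K) (f : MvPolynomial ℕ K) : Prop :=
  F.eval.tsize = 1 ∧ ∀ e, F.eval.entry e = f

end TC

namespace TC

/-- A gate of an arithmetic circuit: an input (constant or variable) or a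
computation gate with the indices of its two children. -/
inductive Gate (K : Type) where
  | const : K → Gate K
  | var : ℕ → Gate K
  | add : ℕ → ℕ → Gate K
  | mul : ℕ → ℕ → Gate K

def Gate.children {K} : Gate K → List ℕ
  | .add j k => [j, k]
  | .mul j k => [j, k]
  | _ => []

def Gate.IsInput {K} : Gate K → Prop
  | .const _ => True
  | .var _ => True
  | _ => False

/-- An arithmetic circuit: a DAG of gates (children point to smaller indices,
which is equivalent to acyclicity) with a distinguished output gate. -/
structure Circuit (K : Type) where
  size : ℕ
  gate : Fin size → Gate K
  output : Fin size
  wf : ∀ i : Fin size, ∀ j ∈ (gate i).children, j < i.val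

/-- The polynomial computed by a gate of the circuit. -/
noncomputable def Circuit.eval {K : Type} [Field K] (C : Circuit K) :
    Fin C.size → MvPolynomial ℕ K
  | i =>
    match h : C.gate i with
    | .const c => MvPolynomial.C c
    | .var n => MvPolynomial.X n
    | .add j k =>
        have hj : j < i.val := C.wf i j (by rw [h]; simp [Gate.children])
        have hk : k < i.val := C.wf i k (by rw [h]; simp [Gate.children])
        C.eval ⟨j, hj.trans i.isLt⟩ + C.eval ⟨k, hk.trans i.isLt⟩
    | .mul j k =>
        have hj : j < i.val := C.wf i j (by rw [h]; simp [Gate.children])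
        have hk : k < i.val := C.wf i k (by rw [h]; simp [Gate.children])
        C.eval ⟨j, hj.trans i.isLt⟩ * C.eval ⟨k, hk.trans i.isLt⟩
  termination_by i => i.val

/-- The circuit computes `f` if its output gate computes `f`. -/
noncomputable def Circuit.Computes {K : Type} [Field K] (C : Circuit K)
    (f : MvPolynomial ℕ K) : Prop :=
  C.eval C.output = f

/-- `a` is a child of `b`. -/
def Circuit.Child {K} (C : Circuit K) (a b : Fin C.size) : Prop :=
  a.val ∈ (C.gate b).children

/-- The set of gates of the subcircuit rooted at `i`. -/
def Circuit.Subgates {K} (C : Circuit K) (i : Fin C.size) : Set (Fin C.size) :=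
  {j | Relation.ReflTransGen C.Child j i}

/-- Multiplicatively disjoint: the subcircuits rooted at the two children of any
`×`-gate are disjoint. -/
def Circuit.MultDisjoint {K} (C : Circuit K) : Prop :=
  ∀ i : Fin C.size, ∀ j k : ℕ, C.gate i = .mul j k →
    ∀ (hj : j < C.size) (hk : k < C.size),
      Disjoint (C.Subgates ⟨j, hj⟩) (C.Subgates ⟨k, hk⟩)

/-- Skew: every `×`-gate has at least one child which is an input gate. -/
def Circuit.Skew {K} (C : Circuit K) : Prop :=
  ∀ i : Fin C.size, ∀ j k : ℕ, C.gate i = .mul j k →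
    ∀ (hj : j < C.size) (hk : k < C.size),
      (C.gate ⟨j, hj⟩).IsInput ∨ (C.gate ⟨k, hk⟩).IsInput

/-- The class VP: families of polynomials computed by polynomial-size
multiplicatively disjoint circuits. -/
noncomputable def VP {K : Type} [Field K] (f : ℕ → MvPolynomial ℕ K) : Prop :=
  ∃ (C : ℕ → Circuit K) (P : Polynomial ℕ),
    ∀ n, (C n).MultDisjoint ∧ (C n).Computes (f n) ∧ (C n).size ≤ P.eval n

/-- Parse trees, recording at each node the index of the corresponding gate. -/
inductive ParseT where
  | leaf : ℕ → ParseT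
  | plus : ℕ → ParseT → ParseT
  | times : ℕ → ParseT → ParseT → ParseT

/-- Ordered rooted trees (shapes of parse trees); two parse trees are isomorphic
as ordered rooted trees iff they have the same shape. -/
inductive Shape where
  | lf : Shape
  | un : Shape → Shape
  | bin : Shape → Shape → Shape

def ParseT.shape : ParseT → Shape
  | .leaf _ => .lf
  | .plus _ t => .un t.shape
  | .times _ l r => .bin l.shape r.shape

/-- Number of vertices of a tree. -/
def Shape.size : Shape → ℕ
  | .lf => 1
  | .un t => t.size + 1
  | .bin l r => l.size + r.size + 1

/-- `C.ParseFrom i t`: `t` is a parse tree of the subcircuit of `C` rooted at gate `i`. -/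
inductive Circuit.ParseFrom {K} (C : Circuit K) : Fin C.size → ParseT → Prop where
  | leaf (i : Fin C.size) (h : (C.gate i).IsInput) : C.ParseFrom i (.leaf i.val)
  | plusL (i : Fin C.size) (j k : ℕ) (h : C.gate i = .add j k) (hj : j < C.size)
      (t : ParseT) (ht : C.ParseFrom ⟨j, hj⟩ t) : C.ParseFrom i (.plus i.val t)
  | plusR (i : Fin C.size) (j k : ℕ) (h : C.gate i = .add j k) (hk : k < C.size)
      (t : ParseT) (ht : C.ParseFrom ⟨k, hk⟩ t) : C.ParseFrom i (.plus i.val t)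
  | times (i : Fin C.size) (j k : ℕ) (h : C.gate i = .mul j k)
      (hj : j < C.size) (hk : k < C.size) (tl tr : ParseT)
      (hl : C.ParseFrom ⟨j, hj⟩ tl) (hr : C.ParseFrom ⟨k, hk⟩ tr) :
      C.ParseFrom i (.times i.val tl tr)

/-- `t` is a parse tree of the circuit `C`. -/
def Circuit.IsParseTree {K} (C : Circuit K) (t : ParseT) : Prop :=
  C.ParseFrom C.output t

end TC


namespace TC
variable {R : Type} [CommSemiring R]

lemma contr_vec_vec (a : ℕ) (f g : Idx [a] → R) :
    Tens.contr ⟨[a], f⟩ ⟨[a], g⟩ =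
      ⟨[], fun _ => ∑ i : Fin a, f (i, PUnit.unit) * g (i, PUnit.unit)⟩ := by
  unfold Tens.contr
  dsimp only [List.getLast?]
  split
  · rfl
  · simp_all

lemma contr_mat_vec (a b : ℕ) (f : Idx [a,b] → R) (g : Idx [b] → R) :
    Tens.contr ⟨[a,b], f⟩ ⟨[b], g⟩ =
      ⟨[a], fun e => ∑ i : Fin b, f (e.1, i, PUnit.unit) * g (i, PUnit.unit)⟩ := by
  unfold Tens.contr
  dsimp only [List.getLast?]
  split
  · rfl
  · simp_all

lemma contr_cube_vec (a b c : ℕ) (f : Idx [a,b,c] → R) (g : Idx [c] → R) :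
    Tens.contr ⟨[a,b,c], f⟩ ⟨[c], g⟩ =
      ⟨[a,b], fun e => ∑ i : Fin c, f (e.1, e.2.1, i, PUnit.unit) * g (i, PUnit.unit)⟩ := by
  unfold Tens.contr
  dsimp only [List.getLast?]
  split
  · rfl
  · simp_all

end TC
namespace TC
variable {K : Type} [Field K]

/-- Vector of input-gate labels. -/
def leafVec (C : Circuit K) : Tens (Entry K) :=
  ⟨[C.size], fun e => match C.gate e.1 with
    | .const c => .const c
    | .var n => .var n
    | _ => .const 0⟩

/-- Adjacency matrix of addition gates. -/
def addMat (C : Circuit K) : Tens (Entry K) :=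
  ⟨[C.size, C.size], fun e => match C.gate e.1 with
    | .add a b => .const ((if a = (e.2.1 : ℕ) then 1 else 0) + (if b = (e.2.1 : ℕ) then 1 else 0))
    | _ => .const 0⟩

/-- Adjacency tensor of multiplication gates. -/
def mulCube (C : Circuit K) : Tens (Entry K) :=
  ⟨[C.size, C.size, C.size], fun e => match C.gate e.1 with
    | .mul a b => .const ((if a = (e.2.1 : ℕ) then 1 else 0) * (if b = (e.2.2.1 : ℕ) then 1 else 0))
    | _ => .const 0⟩

/-- Indicator vector of the output gate. -/
def outVec (C : Circuit K) : Tens (Entry K) :=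
  ⟨[C.size], fun e => .const (if e.1 = C.output then 1 else 0)⟩

noncomputable def build (C : Circuit K) : Shape → SForm K
  | .lf => .input (leafVec C)
  | .un q => .contr (.input (addMat C)) (build C q)
  | .bin q r => .contr (.contr (.input (mulCube C)) (build C r)) (build C q)

noncomputable def wval (C : Circuit K) : Shape → Fin C.size → MvPolynomial ℕ K
  | .lf, i => ((leafVec C).entry (i, PUnit.unit)).toPoly
  | .un q, i => ∑ j : Fin C.size, ((addMat C).entry (i, j, PUnit.unit)).toPoly * wval C q j
  | .bin q r, i => ∑ j : Fin C.size,
      (∑ k : Fin C.size, ((mulCube C).entry (i, j, k, PUnit.unit)).toPoly * wval C r k) * wval C q j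

lemma build_eval (C : Circuit K) (p : Shape) :
    (build C p).eval = ⟨[C.size], fun e => wval C p e.1⟩ := by
  induction p with
  | lf => rfl
  | un q ih =>
      show ((SForm.input (addMat C)).eval).contr (build C q).eval = _
      rw [ih]
      have h1 : (SForm.input (addMat C)).eval
          = ⟨[C.size, C.size], fun e => ((addMat C).entry e).toPoly⟩ := rfl
      rw [h1, contr_mat_vec]
      rfl
  | bin q r ihq ihr =>
      show (((SForm.input (mulCube C)).eval).contr (build C r).eval).contr (build C q).eval = _
      rw [ihq, ihr]
      have h1 : (SForm.input (mulCube C)).eval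
          = ⟨[C.size, C.size, C.size], fun e => ((mulCube C).entry e).toPoly⟩ := rfl
      rw [h1, contr_cube_vec, contr_mat_vec]
      rfl

end TC
namespace TC
variable {K : Type} [Field K]

lemma eval_const (C : Circuit K) (i : Fin C.size) (c : K) (h : C.gate i = .const c) :
    C.eval i = MvPolynomial.C c := by
  rw [Circuit.eval]
  split <;> rename_i h' <;> rw [h] at h' <;> first
    | (injection h'; subst_vars; rfl)
    | exact absurd h' (by simp)

lemma eval_var (C : Circuit K) (i : Fin C.size) (n : ℕ) (h : C.gate i = .var n) :
    C.eval i = MvPolynomial.X n := by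
  rw [Circuit.eval]
  split <;> rename_i h' <;> rw [h] at h' <;> first
    | (injection h'; subst_vars; rfl)
    | exact absurd h' (by simp)

lemma eval_add (C : Circuit K) (i : Fin C.size) (a b : ℕ) (h : C.gate i = .add a b)
    (ha : a < C.size) (hb : b < C.size) :
    C.eval i = C.eval ⟨a, ha⟩ + C.eval ⟨b, hb⟩ := by
  rw [Circuit.eval]
  split <;> rename_i h' <;> rw [h] at h' <;> first
    | (injection h' with h1 h2; subst_vars; rfl)
    | exact absurd h' (by simp)

lemma eval_mul (C : Circuit K) (i : Fin C.size) (a b : ℕ) (h : C.gate i = .mul a b)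
    (ha : a < C.size) (hb : b < C.size) :
    C.eval i = C.eval ⟨a, ha⟩ * C.eval ⟨b, hb⟩ := by
  rw [Circuit.eval]
  split <;> rename_i h' <;> rw [h] at h' <;> first
    | (injection h' with h1 h2; subst_vars; rfl)
    | exact absurd h' (by simp)

lemma child_lt {C : Circuit K} {i : Fin C.size} {a b : ℕ}
    (h : C.gate i = .add a b ∨ C.gate i = .mul a b) : a < C.size ∧ b < C.size := by
  rcases h with h | h
  · exact ⟨(C.wf i a (by rw [h]; simp [Gate.children])).trans i.isLt,
      (C.wf i b (by rw [h]; simp [Gate.children])).trans i.isLt⟩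
  · exact ⟨(C.wf i a (by rw [h]; simp [Gate.children])).trans i.isLt,
      (C.wf i b (by rw [h]; simp [Gate.children])).trans i.isLt⟩

lemma exists_parse (C : Circuit K) (i : Fin C.size) : ∃ t, C.ParseFrom i t := by
  have H : ∀ n, ∀ i : Fin C.size, i.val < n → ∃ t, C.ParseFrom i t := by
    intro n
    induction n with
    | zero => intro i h; omega
    | succ n ih =>
        intro i hi
        match hg : C.gate i with
        | .const c => exact ⟨_, Circuit.ParseFrom.leaf i (by rw [hg]; trivial)⟩
        | .var m => exact ⟨_, Circuit.ParseFrom.leaf i (by rw [hg]; trivial)⟩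
        | .add a b =>
            have ha' : a < i.val := C.wf i a (by rw [hg]; simp [Gate.children])
            have ha : a < C.size := ha'.trans i.isLt
            obtain ⟨t, ht⟩ := ih ⟨a, ha⟩ (show a < n by omega)
            exact ⟨_, Circuit.ParseFrom.plusL i a b hg ha t ht⟩
        | .mul a b =>
            have ha' : a < i.val := C.wf i a (by rw [hg]; simp [Gate.children])
            have hb' : b < i.val := C.wf i b (by rw [hg]; simp [Gate.children])
            have ha : a < C.size := ha'.trans i.isLt
            have hb : b < C.size := hb'.trans i.isLt
            obtain ⟨t, ht⟩ := ih ⟨a, ha⟩ (show a < n by omega)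
            obtain ⟨u, hu⟩ := ih ⟨b, hb⟩ (show b < n by omega)
            exact ⟨_, Circuit.ParseFrom.times i a b hg ha hb t u ht hu⟩
  exact H (i.val + 1) i (by omega)

end TC
namespace TC
variable {K : Type} [Field K]

lemma C_ite (P : Prop) [Decidable P] :
    (MvPolynomial.C (if P then (1:K) else 0) : MvPolynomial ℕ K)
      = if P then 1 else 0 := by
  split <;> simp

lemma sum_indicator {s : ℕ} (a : ℕ) (ha : a < s) (w : Fin s → MvPolynomial ℕ K) :
    ∑ j : Fin s, (if a = (j : ℕ) then (1 : MvPolynomial ℕ K) else 0) * w j = w ⟨a, ha⟩ := by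
  have h : ∀ j : Fin s, (if a = (j : ℕ) then (1 : MvPolynomial ℕ K) else 0) * w j
      = if (⟨a, ha⟩ : Fin s) = j then w j else 0 := by
    intro j
    by_cases h : (⟨a, ha⟩ : Fin s) = j
    · subst h; simp
    · rw [if_neg h, if_neg, zero_mul]
      intro hc; exact h (Fin.ext hc)
  simp only [h]
  simp [Finset.sum_ite_eq]

lemma wval_eq_eval (C : Circuit K) (p : Shape) (i : Fin C.size)
    (hall : ∀ t, C.ParseFrom i t → t.shape = p) : wval C p i = C.eval i := by
  induction p generalizing i with
  | lf =>
      match hg : C.gate i with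
      | .const c =>
          rw [eval_const C i c hg]
          simp only [wval, leafVec]
          rw [hg]
          rfl
      | .var n =>
          rw [eval_var C i n hg]
          simp only [wval, leafVec]
          rw [hg]
          rfl
      | .add a b =>
          obtain ⟨ha, hb⟩ := child_lt (Or.inl hg)
          obtain ⟨t, ht⟩ := exists_parse C ⟨a, ha⟩
          have := hall _ (Circuit.ParseFrom.plusL i a b hg ha t ht)
          simp [ParseT.shape] at this
      | .mul a b =>
          obtain ⟨ha, hb⟩ := child_lt (Or.inr hg)
          obtain ⟨t, ht⟩ := exists_parse C ⟨a, ha⟩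
          obtain ⟨u, hu⟩ := exists_parse C ⟨b, hb⟩
          have := hall _ (Circuit.ParseFrom.times i a b hg ha hb t u ht hu)
          simp [ParseT.shape] at this
  | un q ih =>
      match hg : C.gate i with
      | .const c =>
          have := hall _ (Circuit.ParseFrom.leaf i (by rw [hg]; trivial))
          simp [ParseT.shape] at this
      | .var n =>
          have := hall _ (Circuit.ParseFrom.leaf i (by rw [hg]; trivial))
          simp [ParseT.shape] at this
      | .mul a b =>
          obtain ⟨ha, hb⟩ := child_lt (Or.inr hg)
          obtain ⟨t, ht⟩ := exists_parse C ⟨a, ha⟩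
          obtain ⟨u, hu⟩ := exists_parse C ⟨b, hb⟩
          have := hall _ (Circuit.ParseFrom.times i a b hg ha hb t u ht hu)
          simp [ParseT.shape] at this
      | .add a b =>
          obtain ⟨ha, hb⟩ := child_lt (Or.inl hg)
          have hq_a : ∀ t, C.ParseFrom ⟨a, ha⟩ t → t.shape = q := by
            intro t ht
            have := hall _ (Circuit.ParseFrom.plusL i a b hg ha t ht)
            simpa [ParseT.shape] using this
          have hq_b : ∀ t, C.ParseFrom ⟨b, hb⟩ t → t.shape = q := by
            intro t ht
            have := hall _ (Circuit.ParseFrom.plusR i a b hg hb t ht)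
            simpa [ParseT.shape] using this
          rw [eval_add C i a b hg ha hb, ← ih ⟨a, ha⟩ hq_a, ← ih ⟨b, hb⟩ hq_b]
          simp only [wval, addMat]
          rw [hg]
          simp only [Entry.toPoly, map_add, C_ite, add_mul, Finset.sum_add_distrib]
          rw [sum_indicator a ha, sum_indicator b hb]
  | bin q r ihq ihr =>
      match hg : C.gate i with
      | .const c =>
          have := hall _ (Circuit.ParseFrom.leaf i (by rw [hg]; trivial))
          simp [ParseT.shape] at this
      | .var n =>
          have := hall _ (Circuit.ParseFrom.leaf i (by rw [hg]; trivial))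
          simp [ParseT.shape] at this
      | .add a b =>
          obtain ⟨ha, hb⟩ := child_lt (Or.inl hg)
          obtain ⟨t, ht⟩ := exists_parse C ⟨a, ha⟩
          have := hall _ (Circuit.ParseFrom.plusL i a b hg ha t ht)
          simp [ParseT.shape] at this
      | .mul a b =>
          obtain ⟨ha, hb⟩ := child_lt (Or.inr hg)
          have hq_a : ∀ t, C.ParseFrom ⟨a, ha⟩ t → t.shape = q := by
            intro t ht
            obtain ⟨u, hu⟩ := exists_parse C ⟨b, hb⟩
            have := hall _ (Circuit.ParseFrom.times i a b hg ha hb t u ht hu)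
            simp [ParseT.shape] at this
            exact this.1
          have hr_b : ∀ t, C.ParseFrom ⟨b, hb⟩ t → t.shape = r := by
            intro t ht
            obtain ⟨u, hu⟩ := exists_parse C ⟨a, ha⟩
            have := hall _ (Circuit.ParseFrom.times i a b hg ha hb u t hu ht)
            simp [ParseT.shape] at this
            exact this.2
          rw [eval_mul C i a b hg ha hb, ← ihq ⟨a, ha⟩ hq_a, ← ihr ⟨b, hb⟩ hr_b]
          simp only [wval, mulCube]
          rw [hg]
          simp only [Entry.toPoly, map_mul, C_ite]
          have inner : ∀ j : Fin C.size,
              (∑ k : Fin C.size, ((if a = (j:ℕ) then (1:MvPolynomial ℕ K) else 0) *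
                (if b = (k:ℕ) then 1 else 0)) * wval C r k)
              = (if a = (j:ℕ) then (1:MvPolynomial ℕ K) else 0) * wval C r ⟨b, hb⟩ := by
            intro j
            rw [← sum_indicator b hb (wval C r), Finset.mul_sum]
            exact Finset.sum_congr rfl fun k _ => by ring
          simp only [inner]
          have outer : ∀ j : Fin C.size,
              ((if a = (j:ℕ) then (1:MvPolynomial ℕ K) else 0) * wval C r ⟨b, hb⟩) * wval C q j
              = ((if a = (j:ℕ) then (1:MvPolynomial ℕ K) else 0) * wval C q j) * wval C r ⟨b, hb⟩ := by
            intro j; ring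
          simp only [outer]
          rw [← Finset.sum_mul, sum_indicator a ha]

end TC
namespace TC
variable {K : Type} [Field K]

noncomputable def fullForm (C : Circuit K) (S : Shape) : SForm K :=
  .contr (build C S) (.input (outVec C))

lemma inner_eval (C : Circuit K) (r : Shape) :
    (SForm.contr (.input (mulCube C)) (build C r)).eval
      = ⟨[C.size, C.size], fun e => ∑ k : Fin C.size,
          ((mulCube C).entry (e.1, e.2.1, k, PUnit.unit)).toPoly * wval C r k⟩ := by
  show ((SForm.input (mulCube C)).eval).contr (build C r).eval = _
  rw [build_eval]
  have h1 : (SForm.input (mulCube C)).eval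
      = ⟨[C.size, C.size, C.size], fun e => ((mulCube C).entry e).toPoly⟩ := rfl
  rw [h1, contr_cube_vec]

lemma build_wf (C : Circuit K) (p : Shape) : (build C p).WF := by
  induction p with
  | lf => trivial
  | un q ih =>
      refine ⟨trivial, ih, ?_⟩
      rw [show (SForm.input (addMat C)).eval
        = ⟨[C.size, C.size], fun e => ((addMat C).entry e).toPoly⟩ from rfl, build_eval]
      exact ⟨by simp, by simp, by simp⟩
  | bin q r ihq ihr =>
      refine ⟨⟨trivial, ihr, ?_⟩, ihq, ?_⟩
      · rw [show (SForm.input (mulCube C)).eval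
          = ⟨[C.size, C.size, C.size], fun e => ((mulCube C).entry e).toPoly⟩ from rfl, build_eval]
        exact ⟨by simp, by simp, by simp⟩
      · rw [inner_eval, build_eval]
        exact ⟨by simp, by simp, by simp⟩

lemma build_maxdim (C : Circuit K) (p : Shape) : (build C p).maxdim ≤ 3 := by
  induction p with
  | lf =>
      show (leafVec C).dim ≤ 3
      simp [leafVec, Tens.dim]
  | un q ih =>
      show max ((SForm.input (addMat C)).eval.contr (build C q).eval).dim
        (max (SForm.input (addMat C)).maxdim (build C q).maxdim) ≤ 3
      rw [show (SForm.input (addMat C)).eval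
        = ⟨[C.size, C.size], fun e => ((addMat C).entry e).toPoly⟩ from rfl, build_eval,
        contr_mat_vec]
      refine max_le (by simp [Tens.dim]) (max_le ?_ ih)
      simp [SForm.maxdim, addMat, Tens.dim]
  | bin q r ihq ihr =>
      show max ((SForm.contr (.input (mulCube C)) (build C r)).eval.contr (build C q).eval).dim
        (max (SForm.contr (.input (mulCube C)) (build C r)).maxdim (build C q).maxdim) ≤ 3
      rw [inner_eval, build_eval, contr_mat_vec]
      refine max_le (by simp [Tens.dim]) (max_le ?_ ihq)
      show max ((SForm.input (mulCube C)).eval.contr (build C r).eval).dim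
        (max (SForm.input (mulCube C)).maxdim (build C r).maxdim) ≤ 3
      rw [show (SForm.input (mulCube C)).eval
        = ⟨[C.size, C.size, C.size], fun e => ((mulCube C).entry e).toPoly⟩ from rfl, build_eval,
        contr_cube_vec]
      refine max_le (by simp [Tens.dim]) (max_le ?_ ihr)
      simp [SForm.maxdim, mulCube, Tens.dim]

lemma shape_size_pos (p : Shape) : 1 ≤ p.size := by
  induction p <;> simp [Shape.size]

lemma build_size (C : Circuit K) (p : Shape) :
    (build C p).size ≤ (C.size ^ 3 + 2) * p.size := by
  set s := C.size with hs
  induction p with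
  | lf =>
      show (leafVec C).tsize ≤ (s ^ 3 + 2) * Shape.lf.size
      have : (leafVec C).tsize = s := by simp [Tens.tsize, leafVec, hs]
      rw [this]
      have h3 : s ≤ s ^ 3 := Nat.le_self_pow (by norm_num) s
      simp only [Shape.size]
      linarith
  | un q ih =>
      show (SForm.input (addMat C)).size + (build C q).size + 1 ≤ _
      have h1 : (SForm.input (addMat C)).size = s * (s * 1) := by
        simp [SForm.size, Tens.tsize, addMat, hs]
      rw [h1]
      simp only [Shape.size]
      have key : s * (s * 1) ≤ s ^ 3 + 1 := by
        rcases Nat.eq_zero_or_pos s with h | h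
        · simp [h]
        · have h2 : s * s ≤ s * s * s := Nat.le_mul_of_pos_right _ h
          nlinarith
      have hx : (s ^ 3 + 2) * (q.size + 1) = (s ^ 3 + 2) * q.size + (s ^ 3 + 2) := by ring
      rw [hx]
      linarith [ih]
  | bin q r ihq ihr =>
      show (SForm.input (mulCube C)).size + (build C r).size + 1 + (build C q).size + 1 ≤ _
      have h1 : (SForm.input (mulCube C)).size = s * (s * (s * 1)) := by
        simp [SForm.size, Tens.tsize, mulCube, hs]
      rw [h1]
      simp only [Shape.size]
      have e : s * (s * (s * 1)) = s ^ 3 := by ring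
      rw [e]
      have hx : (s ^ 3 + 2) * (q.size + r.size + 1)
          = (s ^ 3 + 2) * q.size + (s ^ 3 + 2) * r.size + (s ^ 3 + 2) := by ring
      rw [hx]
      linarith [ihq, ihr]

end TC
namespace TC
variable {K : Type} [Field K]

lemma fullForm_eval (C : Circuit K) (S : Shape) :
    (fullForm C S).eval = ⟨[], fun _ => wval C S C.output⟩ := by
  show ((build C S).eval).contr (SForm.input (outVec C)).eval = _
  rw [build_eval, show (SForm.input (outVec C)).eval
    = ⟨[C.size], fun e => ((outVec C).entry e).toPoly⟩ from rfl, contr_vec_vec]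
  congr 1
  funext e
  have h : ∀ i : Fin C.size, wval C S i * ((outVec C).entry (i, PUnit.unit)).toPoly
      = if C.output = i then wval C S i else 0 := by
    intro i
    show wval C S i * (Entry.const (if i = C.output then 1 else 0)).toPoly = _
    by_cases h : C.output = i
    · subst h; simp [Entry.toPoly]
    · rw [if_neg h, if_neg (fun hc => h hc.symm)]
      simp [Entry.toPoly]
  simp only [h]
  simp [Finset.sum_ite_eq]

theorem circuit_to_star_formula' {K : Type} [Field K] (C : Circuit K)
    (f : MvPolynomial ℕ K) (S : Shape)
    (hf : C.Computes f)
    (hpt : ∀ t : ParseT, C.IsParseTree t → t.shape = S) :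
    ∃ F : SForm K, F.WF ∧ F.maxdim ≤ 3 ∧ F.size ≤ 9 * C.size ^ 3 * S.size ∧
      F.ComputesPoly f := by
  refine ⟨fullForm C S, ?_, ?_, ?_, ?_⟩
  · refine ⟨build_wf C S, trivial, ?_⟩
    rw [build_eval, show (SForm.input (outVec C)).eval
      = ⟨[C.size], fun e => ((outVec C).entry e).toPoly⟩ from rfl]
    exact ⟨by simp, by simp, by simp⟩
  · show max ((build C S).eval.contr (SForm.input (outVec C)).eval).dim
      (max (build C S).maxdim (SForm.input (outVec C)).maxdim) ≤ 3
    rw [build_eval, show (SForm.input (outVec C)).eval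
      = ⟨[C.size], fun e => ((outVec C).entry e).toPoly⟩ from rfl, contr_vec_vec]
    refine max_le (by simp [Tens.dim]) (max_le (build_maxdim C S) ?_)
    simp [SForm.maxdim, outVec, Tens.dim]
  · show (build C S).size + (SForm.input (outVec C)).size + 1 ≤ 9 * C.size ^ 3 * S.size
    have h1 : (SForm.input (outVec C)).size = C.size * 1 := by
      simp [SForm.size, Tens.tsize, outVec]
    rw [h1]
    have hs : 1 ≤ C.size := Nat.lt_of_le_of_lt (Nat.zero_le _) C.output.isLt
    have hS := shape_size_pos S
    have hb := build_size C S
    set s := C.size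
    have h3 : s ≤ s ^ 3 := Nat.le_self_pow (by norm_num) s
    have key : (s ^ 3 + 2) * S.size + s * 1 + 1 ≤ 9 * s ^ 3 * S.size := by
      have h2 : 1 ≤ s ^ 3 := Nat.one_le_iff_ne_zero.mpr (pow_ne_zero _ (by omega))
      nlinarith [Nat.mul_le_mul (le_refl (6 * s ^ 3)) hS]
    linarith
  · constructor
    · rw [fullForm_eval]; rfl
    · rw [fullForm_eval]
      intro e
      show wval C S C.output = f
      rw [wval_eq_eval C S C.output hpt]
      exact hf

end TC
open TC

/-- a multiplicatively disjoint circuit all of whose parse trees have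
a common shape `S` can be simulated by a `{*}`-formula of maximal dimension 3
and size at most `9 * |C|^3 * |S|`. -/
theorem circuit_to_star_formula {K : Type} [Field K] (C : Circuit K)
    (f : MvPolynomial ℕ K) (S : Shape)
    (hmd : C.MultDisjoint) (hf : C.Computes f)
    (hpt : ∀ t : ParseT, C.IsParseTree t → t.shape = S) :
    ∃ F : SForm K, F.WF ∧ F.maxdim ≤ 3 ∧ F.size ≤ 9 * C.size ^ 3 * S.size ∧
      F.ComputesPoly f := by
  exact circuit_to_star_formula' C f S hf hpt
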